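/- Let σ, ρ, β ∈ ℝ, T > 0, and let (x, y, z) : ℝ → ℝ³ be twice continuously differentiable and 1-periodic, with residuals r_x, r_y, r_z as defined. Then for every continuously differentiable 1-periodic perturbation (δx, δy, δz) : ℝ → ℝ³ and every δT ∈ ℝ, the Gateaux derivative of the loop cost satisfies: (d/dε)|_{ε=0} J₁²[x+εδx, y+εδy, z+εδz, T+εδT] = ∫₀¹ [(−(1/T)r_x′ + σ r_x − (ρ−z) r_y − y r_z)·δx + (−(1/T)r_y′ − σ r_x + r_y − x r_z)·δy + (−(1/T)r_z′ + x r_y + β r_z)·δz] ds − (δT/T²)·∫₀¹ (x′ r_x + y′ r_y + z′ r_z) ds. (Equivalently, the negative gradient of J₁² is the adjoint descent direction of Eq. (14) of the paper.) -/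

import Mathlib

open intervalIntegral MeasureTheory

lemma periodic_deriv (f : ℝ → ℝ) (hf : Differentiable ℝ f) (hp : Function.Periodic f 1) :
    Function.Periodic (deriv f) 1 := by
  intro s
  have h1 : HasDerivAt (fun t : ℝ => f (t + 1)) (deriv f (s + 1)) s := by
    have h2 := ((hf (s + 1)).hasDerivAt).comp s ((hasDerivAt_id s).add_const 1)
    simpa [Function.comp_def] using h2
  have h3 : (fun t : ℝ => f (t + 1)) = f := funext hp
  rw [h3] at h1
  exact h1.deriv.symm

lemma integral_add3 {f g h : ℝ → ℝ} (hf : Continuous f) (hg : Continuous g) (hh : Continuous h) :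
    (∫ s in (0:ℝ)..1, (f s + g s + h s))
      = (∫ s in (0:ℝ)..1, f s) + (∫ s in (0:ℝ)..1, g s) + (∫ s in (0:ℝ)..1, h s) := by
  rw [intervalIntegral.integral_add (f := fun s => f s + g s) ((hf.add hg).intervalIntegrable 0 1) (hh.intervalIntegrable 0 1),
      intervalIntegral.integral_add (hf.intervalIntegrable 0 1) (hg.intervalIntegrable 0 1)]

lemma integral_comb5 {f1 f2 f3 g h : ℝ → ℝ} (c1 c2 c3 cg ch : ℝ)
    (k1 : Continuous f1) (k2 : Continuous f2) (k3 : Continuous f3)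
    (kg : Continuous g) (kh : Continuous h) :
    (∫ s in (0:ℝ)..1, (c1 * f1 s + c2 * f2 s + c3 * f3 s + cg * g s + ch * h s))
      = c1 * (∫ s in (0:ℝ)..1, f1 s) + c2 * (∫ s in (0:ℝ)..1, f2 s)
        + c3 * (∫ s in (0:ℝ)..1, f3 s) + cg * (∫ s in (0:ℝ)..1, g s)
        + ch * (∫ s in (0:ℝ)..1, h s) := by
  have i1 : IntervalIntegrable (fun s => c1 * f1 s) volume 0 1 :=
    Continuous.intervalIntegrable (by fun_prop) 0 1
  have i2 : IntervalIntegrable (fun s => c2 * f2 s) volume 0 1 :=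
    Continuous.intervalIntegrable (by fun_prop) 0 1
  have i3 : IntervalIntegrable (fun s => c3 * f3 s) volume 0 1 :=
    Continuous.intervalIntegrable (by fun_prop) 0 1
  have ig : IntervalIntegrable (fun s => cg * g s) volume 0 1 :=
    Continuous.intervalIntegrable (by fun_prop) 0 1
  have ih : IntervalIntegrable (fun s => ch * h s) volume 0 1 :=
    Continuous.intervalIntegrable (by fun_prop) 0 1
  have i12 : IntervalIntegrable (fun s => c1 * f1 s + c2 * f2 s) volume 0 1 :=
    Continuous.intervalIntegrable (by fun_prop) 0 1
  have i123 : IntervalIntegrable (fun s => c1 * f1 s + c2 * f2 s + c3 * f3 s) volume 0 1 :=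
    Continuous.intervalIntegrable (by fun_prop) 0 1
  have i1234 : IntervalIntegrable (fun s => c1 * f1 s + c2 * f2 s + c3 * f3 s + cg * g s) volume 0 1 :=
    Continuous.intervalIntegrable (by fun_prop) 0 1
  rw [intervalIntegral.integral_add i1234 ih, intervalIntegral.integral_add i123 ig,
      intervalIntegral.integral_add i12 i3, intervalIntegral.integral_add i1 i2,
      intervalIntegral.integral_const_mul, intervalIntegral.integral_const_mul,
      intervalIntegral.integral_const_mul, intervalIntegral.integral_const_mul,
      intervalIntegral.integral_const_mul]

/-- Derivative of one squared-residual component of the loop cost. -/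
lemma comp_hasDerivAt (T δT : ℝ) (hT : T ≠ 0) (a b p q w : ℝ → ℝ)
    (ha : Continuous a) (hb : Continuous b) (hp : Continuous p) (hq : Continuous q)
    (hw : Continuous w) :
    HasDerivAt (fun ε : ℝ => ∫ s in (0:ℝ)..1,
        ((1/(T + ε*δT)) * (a s + ε * b s) + (p s + ε * q s + ε^2 * w s))^2)
      (∫ s in (0:ℝ)..1,
        2 * ((1/T) * a s + p s) * ((1/T) * b s + q s - (δT/T^2) * a s)) 0 := by
  set n0 : ℝ → ℝ := fun s => (a s + T*p s)^2 with hn0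
  set n1 : ℝ → ℝ := fun s => 2*(a s + T*p s)*(b s + δT*p s + T*q s) with hn1
  set n2 : ℝ → ℝ := fun s => (b s + δT*p s + T*q s)^2 + 2*(a s + T*p s)*(δT*q s + T*w s) with hn2
  set n3 : ℝ → ℝ := fun s => 2*(a s + T*p s)*(δT*w s) + 2*(b s + δT*p s + T*q s)*(δT*q s + T*w s) with hn3
  set n4 : ℝ → ℝ := fun s => (δT*q s + T*w s)^2 + 2*(b s + δT*p s + T*q s)*(δT*w s) with hn4
  set n5 : ℝ → ℝ := fun s => 2*(δT*q s + T*w s)*(δT*w s) with hn5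
  set n6 : ℝ → ℝ := fun s => (δT*w s)^2 with hn6
  have hc0 : Continuous n0 := by rw [hn0]; fun_prop
  have hc1 : Continuous n1 := by rw [hn1]; fun_prop
  have hc2 : Continuous n2 := by rw [hn2]; fun_prop
  have hc3 : Continuous n3 := by rw [hn3]; fun_prop
  have hc4 : Continuous n4 := by rw [hn4]; fun_prop
  have hc5 : Continuous n5 := by rw [hn5]; fun_prop
  have hc6 : Continuous n6 := by rw [hn6]; fun_prop
  set N0 : ℝ := ∫ s in (0:ℝ)..1, n0 s with hN0
  set N1 : ℝ := ∫ s in (0:ℝ)..1, n1 s with hN1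
  set N2 : ℝ := ∫ s in (0:ℝ)..1, n2 s with hN2
  set N3 : ℝ := ∫ s in (0:ℝ)..1, n3 s with hN3
  set N4 : ℝ := ∫ s in (0:ℝ)..1, n4 s with hN4
  set N5 : ℝ := ∫ s in (0:ℝ)..1, n5 s with hN5
  set N6 : ℝ := ∫ s in (0:ℝ)..1, n6 s with hN6
  -- derivative of the model function g
  have hlin : HasDerivAt (fun ε : ℝ => T + ε*δT) δT 0 := by
    simpa using (((hasDerivAt_id (0:ℝ)).mul_const δT).const_add T)
  have hne0 : T + 0*δT ≠ 0 := by simpa using hT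
  have hu : HasDerivAt (fun ε : ℝ => 1/(T + ε*δT)) (-δT/T^2) 0 := by
    have := hlin.inv hne0
    simp only [one_div]
    refine this.congr_deriv ?_
    rw [zero_mul, add_zero]
  have husq : HasDerivAt (fun ε : ℝ => (1/(T + ε*δT))^2)
      (2 * (1/(T + 0*δT))^1 * (-δT/T^2)) 0 := hu.pow 2
  have hk : ∀ (c : ℝ) (k : ℕ), 2 ≤ k → HasDerivAt (fun ε : ℝ => c * ε^k) 0 (0:ℝ) := by
    intro c k hk2
    have := (hasDerivAt_pow k (0:ℝ)).const_mul c
    simpa [zero_pow (by omega : k-1 ≠ 0)] using this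
  have hpoly : HasDerivAt (fun ε : ℝ =>
      N0 + N1*ε + N2*ε^2 + N3*ε^3 + N4*ε^4 + N5*ε^5 + N6*ε^6) N1 0 := by
    have h0 : HasDerivAt (fun _ : ℝ => N0) 0 (0:ℝ) := hasDerivAt_const 0 N0
    have h1 : HasDerivAt (fun ε : ℝ => N1 * ε) N1 0 := by
      simpa using (hasDerivAt_id (0:ℝ)).const_mul N1
    simpa [Pi.add_def] using ((((((h0.add h1).add (hk N2 2 le_rfl)).add (hk N3 3 (by norm_num))).add
      (hk N4 4 (by norm_num))).add (hk N5 5 (by norm_num))).add (hk N6 6 (by norm_num)))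
  have hg : HasDerivAt (fun ε : ℝ => (1/(T + ε*δT))^2 *
      (N0 + N1*ε + N2*ε^2 + N3*ε^3 + N4*ε^4 + N5*ε^5 + N6*ε^6))
      ((2 * (1/(T + 0*δT))^1 * (-δT/T^2)) * (N0 + N1*0 + N2*0^2 + N3*0^3 + N4*0^4 + N5*0^5 + N6*0^6)
        + (1/(T + 0*δT))^2 * N1) 0 := husq.mul hpoly
  -- the original function agrees with g near 0
  have hcont : Continuous fun ε : ℝ => T + ε*δT := by fun_prop
  have hnear : ∀ᶠ ε in nhds (0:ℝ), T + ε*δT ≠ 0 :=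
    (hcont.continuousAt (x := 0)).eventually_ne hne0
  have heq : (fun ε : ℝ => ∫ s in (0:ℝ)..1,
        ((1/(T + ε*δT)) * (a s + ε * b s) + (p s + ε * q s + ε^2 * w s))^2)
      =ᶠ[nhds (0:ℝ)] (fun ε : ℝ => (1/(T + ε*δT))^2 *
        (N0 + N1*ε + N2*ε^2 + N3*ε^3 + N4*ε^4 + N5*ε^5 + N6*ε^6)) := by
    filter_upwards [hnear] with ε hε
    have step1 : (∫ s in (0:ℝ)..1,
          ((1/(T + ε*δT)) * (a s + ε * b s) + (p s + ε * q s + ε^2 * w s))^2)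
        = ∫ s in (0:ℝ)..1, (1/(T + ε*δT))^2 *
          (n0 s + ε*n1 s + ε^2*n2 s + ε^3*n3 s + ε^4*n4 s + ε^5*n5 s + ε^6*n6 s) := by
      apply intervalIntegral.integral_congr
      intro s _
      rw [hn0, hn1, hn2, hn3, hn4, hn5, hn6]
      field_simp
      ring
    rw [step1, intervalIntegral.integral_const_mul]
    congr 1
    rw [intervalIntegral.integral_add (by apply Continuous.intervalIntegrable; fun_prop)
          (by apply Continuous.intervalIntegrable; fun_prop),
        intervalIntegral.integral_add (by apply Continuous.intervalIntegrable; fun_prop)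
          (by apply Continuous.intervalIntegrable; fun_prop),
        intervalIntegral.integral_add (by apply Continuous.intervalIntegrable; fun_prop)
          (by apply Continuous.intervalIntegrable; fun_prop),
        intervalIntegral.integral_add (by apply Continuous.intervalIntegrable; fun_prop)
          (by apply Continuous.intervalIntegrable; fun_prop),
        intervalIntegral.integral_add (by apply Continuous.intervalIntegrable; fun_prop)
          (by apply Continuous.intervalIntegrable; fun_prop),
        intervalIntegral.integral_add (by apply Continuous.intervalIntegrable; fun_prop)
          (by apply Continuous.intervalIntegrable; fun_prop),
        intervalIntegral.integral_const_mul, intervalIntegral.integral_const_mul,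
        intervalIntegral.integral_const_mul, intervalIntegral.integral_const_mul,
        intervalIntegral.integral_const_mul, intervalIntegral.integral_const_mul,
        ← hN0, ← hN1, ← hN2, ← hN3, ← hN4, ← hN5, ← hN6]
    ring
  have hmain := hg.congr_of_eventuallyEq heq
  -- identify the derivative value
  refine hmain.congr_deriv ?_
  have hval : (∫ s in (0:ℝ)..1,
      2 * ((1/T) * a s + p s) * ((1/T) * b s + q s - (δT/T^2) * a s))
      = (-2*δT/T^3) * N0 + (1/T^2) * N1 := by
    rw [hN0, hN1, ← intervalIntegral.integral_const_mul, ← intervalIntegral.integral_const_mul,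
      ← intervalIntegral.integral_add (by apply Continuous.intervalIntegrable; fun_prop)
        (by apply Continuous.intervalIntegrable; fun_prop)]
    apply intervalIntegral.integral_congr
    intro s _
    rw [hn0, hn1]
    field_simp
    ring
  rw [hval]
  simp only [zero_mul, add_zero, mul_zero, pow_one, mul_one, zero_pow, ne_eq, OfNat.ofNat_ne_zero,
    not_false_eq_true]
  field_simp

/-- Gateaux derivative of the Lorenz loop cost `J₁²`: for a twice continuously differentiable
1-periodic loop `(x, y, z)` with period `T > 0`, residuals `r_x, r_y, r_z`, and any continuously
differentiable 1-periodic perturbation `(δx, δy, δz)` together with `δT ∈ ℝ`, the derivative of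
`ε ↦ J₁²[x + εδx, y + εδy, z + εδz, T + εδT]` at `ε = 0` is given by the adjoint expression of
Eq. (14) of the paper. -/
theorem stmt_14 (σ ρ β T : ℝ) (hT : 0 < T)
    (x y z : ℝ → ℝ)
    (hx : ContDiff ℝ 2 x) (hy : ContDiff ℝ 2 y) (hz : ContDiff ℝ 2 z)
    (hpx : Function.Periodic x 1) (hpy : Function.Periodic y 1) (hpz : Function.Periodic z 1)
    (δx δy δz : ℝ → ℝ)
    (hδx : ContDiff ℝ 1 δx) (hδy : ContDiff ℝ 1 δy) (hδz : ContDiff ℝ 1 δz)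
    (hpδx : Function.Periodic δx 1) (hpδy : Function.Periodic δy 1)
    (hpδz : Function.Periodic δz 1)
    (δT : ℝ)
    (rx ry rz : ℝ → ℝ)
    (hrx : ∀ s : ℝ, rx s = (1 / T) * deriv x s - σ * (y s - x s))
    (hry : ∀ s : ℝ, ry s = (1 / T) * deriv y s - x s * (ρ - z s) + y s)
    (hrz : ∀ s : ℝ, rz s = (1 / T) * deriv z s - x s * y s + β * z s) :
    HasDerivAt
      (fun ε : ℝ =>
        ((1 : ℝ) / 2) * ∫ s in (0 : ℝ)..1,
          (((1 / (T + ε * δT)) * deriv (fun s' => x s' + ε * δx s') s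
              - σ * ((y s + ε * δy s) - (x s + ε * δx s))) ^ 2
            + ((1 / (T + ε * δT)) * deriv (fun s' => y s' + ε * δy s') s
              - (x s + ε * δx s) * (ρ - (z s + ε * δz s)) + (y s + ε * δy s)) ^ 2
            + ((1 / (T + ε * δT)) * deriv (fun s' => z s' + ε * δz s') s
              - (x s + ε * δx s) * (y s + ε * δy s) + β * (z s + ε * δz s)) ^ 2))
      ((∫ s in (0 : ℝ)..1,
          ((-(1 / T) * deriv rx s + σ * rx s - (ρ - z s) * ry s - y s * rz s) * δx s
            + (-(1 / T) * deriv ry s - σ * rx s + ry s - x s * rz s) * δy s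
            + (-(1 / T) * deriv rz s + x s * ry s + β * rz s) * δz s))
        - (δT / T ^ 2) *
          ∫ s in (0 : ℝ)..1, (deriv x s * rx s + deriv y s * ry s + deriv z s * rz s))
      0 := by
  have hT' : T ≠ 0 := ne_of_gt hT
  -- differentiability and continuity facts
  have hxd : Differentiable ℝ x := hx.differentiable (by norm_num)
  have hyd : Differentiable ℝ y := hy.differentiable (by norm_num)
  have hzd : Differentiable ℝ z := hz.differentiable (by norm_num)
  have hδxd : Differentiable ℝ δx := hδx.differentiable one_ne_zero
  have hδyd : Differentiable ℝ δy := hδy.differentiable one_ne_zero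
  have hδzd : Differentiable ℝ δz := hδz.differentiable one_ne_zero
  have hx1 : ContDiff ℝ 1 (deriv x) := (contDiff_succ_iff_deriv.mp (by norm_num; exact hx : ContDiff ℝ (1+1) x)).2.2
  have hy1 : ContDiff ℝ 1 (deriv y) := (contDiff_succ_iff_deriv.mp (by norm_num; exact hy : ContDiff ℝ (1+1) y)).2.2
  have hz1 : ContDiff ℝ 1 (deriv z) := (contDiff_succ_iff_deriv.mp (by norm_num; exact hz : ContDiff ℝ (1+1) z)).2.2
  have hx1d : Differentiable ℝ (deriv x) := hx1.differentiable one_ne_zero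
  have hy1d : Differentiable ℝ (deriv y) := hy1.differentiable one_ne_zero
  have hz1d : Differentiable ℝ (deriv z) := hz1.differentiable one_ne_zero
  have hxc : Continuous x := hx.continuous
  have hyc : Continuous y := hy.continuous
  have hzc : Continuous z := hz.continuous
  have hδxc : Continuous δx := hδx.continuous
  have hδyc : Continuous δy := hδy.continuous
  have hδzc : Continuous δz := hδz.continuous
  have hx1c : Continuous (deriv x) := hx1.continuous
  have hy1c : Continuous (deriv y) := hy1.continuous
  have hz1c : Continuous (deriv z) := hz1.continuous
  have hx2c : Continuous (deriv (deriv x)) := hx1.continuous_deriv le_rfl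
  have hy2c : Continuous (deriv (deriv y)) := hy1.continuous_deriv le_rfl
  have hz2c : Continuous (deriv (deriv z)) := hz1.continuous_deriv le_rfl
  have hδx1c : Continuous (deriv δx) := hδx.continuous_deriv le_rfl
  have hδy1c : Continuous (deriv δy) := hδy.continuous_deriv le_rfl
  have hδz1c : Continuous (deriv δz) := hδz.continuous_deriv le_rfl
  -- rewriting the inner derivatives
  have hdx : ∀ ε s : ℝ, deriv (fun s' => x s' + ε * δx s') s = deriv x s + ε * deriv δx s :=
    fun ε s => (((hxd s).hasDerivAt).add (((hδxd s).hasDerivAt).const_mul ε)).deriv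
  have hdy : ∀ ε s : ℝ, deriv (fun s' => y s' + ε * δy s') s = deriv y s + ε * deriv δy s :=
    fun ε s => (((hyd s).hasDerivAt).add (((hδyd s).hasDerivAt).const_mul ε)).deriv
  have hdz : ∀ ε s : ℝ, deriv (fun s' => z s' + ε * δz s') s = deriv z s + ε * deriv δz s :=
    fun ε s => (((hzd s).hasDerivAt).add (((hδzd s).hasDerivAt).const_mul ε)).deriv
  -- boundary (periodicity) facts
  have hbx : x 1 = x 0 := by simpa using hpx 0
  have hby : y 1 = y 0 := by simpa using hpy 0
  have hbz : z 1 = z 0 := by simpa using hpz 0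
  have hbδx : δx 1 = δx 0 := by simpa using hpδx 0
  have hbδy : δy 1 = δy 0 := by simpa using hpδy 0
  have hbδz : δz 1 = δz 0 := by simpa using hpδz 0
  have hbx1 : deriv x 1 = deriv x 0 := by simpa using periodic_deriv x hxd hpx 0
  have hby1 : deriv y 1 = deriv y 0 := by simpa using periodic_deriv y hyd hpy 0
  have hbz1 : deriv z 1 = deriv z 0 := by simpa using periodic_deriv z hzd hpz 0
  -- derivatives of the residuals
  have hdXf : ∀ s : ℝ, HasDerivAt (fun t => 1 / T * deriv x t - σ * (y t - x t))
      (1 / T * deriv (deriv x) s - σ * (deriv y s - deriv x s)) s :=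
    fun s => (((hx1d s).hasDerivAt).const_mul (1 / T)).sub
      ((((hyd s).hasDerivAt).sub ((hxd s).hasDerivAt)).const_mul σ)
  have hdYf : ∀ s : ℝ, HasDerivAt (fun t => 1 / T * deriv y t - x t * (ρ - z t) + y t)
      (1 / T * deriv (deriv y) s - (deriv x s * (ρ - z s) + x s * (0 - deriv z s)) + deriv y s) s :=
    fun s => ((((hy1d s).hasDerivAt).const_mul (1 / T)).sub
      (((hxd s).hasDerivAt).mul ((hasDerivAt_const s ρ).sub ((hzd s).hasDerivAt)))).add
      ((hyd s).hasDerivAt)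
  have hdZf : ∀ s : ℝ, HasDerivAt (fun t => 1 / T * deriv z t - x t * y t + β * z t)
      (1 / T * deriv (deriv z) s - (deriv x s * y s + x s * deriv y s) + β * deriv z s) s :=
    fun s => ((((hz1d s).hasDerivAt).const_mul (1 / T)).sub
      (((hxd s).hasDerivAt).mul ((hyd s).hasDerivAt))).add (((hzd s).hasDerivAt).const_mul β)
  have hrxf : rx = fun s => 1 / T * deriv x s - σ * (y s - x s) := funext hrx
  have hryf : ry = fun s => 1 / T * deriv y s - x s * (ρ - z s) + y s := funext hry
  have hrzf : rz = fun s => 1 / T * deriv z s - x s * y s + β * z s := funext hrz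
  have hdrx : ∀ s : ℝ, deriv rx s = 1 / T * deriv (deriv x) s - σ * (deriv y s - deriv x s) := by
    intro s; have h := hdXf s; rw [← hrxf] at h; exact h.deriv
  have hdry : ∀ s : ℝ, deriv ry s
      = 1 / T * deriv (deriv y) s - (deriv x s * (ρ - z s) + x s * (0 - deriv z s)) + deriv y s := by
    intro s; have h := hdYf s; rw [← hryf] at h; exact h.deriv
  have hdrz : ∀ s : ℝ, deriv rz s
      = 1 / T * deriv (deriv z) s - (deriv x s * y s + x s * deriv y s) + β * deriv z s := by
    intro s; have h := hdZf s; rw [← hrzf] at h; exact h.deriv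
  -- the exact-derivative (FTC) identity: the integral of d/ds (r·δ) vanishes
  have hΦder : ∀ s : ℝ, HasDerivAt (fun t => (1 / T * deriv x t - σ * (y t - x t)) * δx t + (1 / T * deriv y t - x t * (ρ - z t) + y t) * δy t + (1 / T * deriv z t - x t * y t + β * z t) * δz t)
      (((1 / T * deriv (deriv x) s - σ * (deriv y s - deriv x s)) * δx s + (1 / T * deriv x s - σ * (y s - x s)) * deriv δx s) + ((1 / T * deriv (deriv y) s - (deriv x s * (ρ - z s) + x s * (0 - deriv z s)) + deriv y s) * δy s + (1 / T * deriv y s - x s * (ρ - z s) + y s) * deriv δy s) + ((1 / T * deriv (deriv z) s - (deriv x s * y s + x s * deriv y s) + β * deriv z s) * δz s + (1 / T * deriv z s - x s * y s + β * z s) * deriv δz s)) s :=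
    fun s => (((hdXf s).mul ((hδxd s).hasDerivAt)).add
      ((hdYf s).mul ((hδyd s).hasDerivAt))).add ((hdZf s).mul ((hδzd s).hasDerivAt))
  have hftc : (∫ s in (0:ℝ)..1, ((1 / T * deriv (deriv x) s - σ * (deriv y s - deriv x s)) * δx s + (1 / T * deriv x s - σ * (y s - x s)) * deriv δx s) + ((1 / T * deriv (deriv y) s - (deriv x s * (ρ - z s) + x s * (0 - deriv z s)) + deriv y s) * δy s + (1 / T * deriv y s - x s * (ρ - z s) + y s) * deriv δy s) + ((1 / T * deriv (deriv z) s - (deriv x s * y s + x s * deriv y s) + β * deriv z s) * δz s + (1 / T * deriv z s - x s * y s + β * z s) * deriv δz s))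
      = ((1 / T * deriv x 1 - σ * (y 1 - x 1)) * δx 1 + (1 / T * deriv y 1 - x 1 * (ρ - z 1) + y 1) * δy 1 + (1 / T * deriv z 1 - x 1 * y 1 + β * z 1) * δz 1) - ((1 / T * deriv x 0 - σ * (y 0 - x 0)) * δx 0 + (1 / T * deriv y 0 - x 0 * (ρ - z 0) + y 0) * δy 0 + (1 / T * deriv z 0 - x 0 * y 0 + β * z 0) * δz 0) :=
    intervalIntegral.integral_eq_sub_of_hasDerivAt (f := fun t => (1 / T * deriv x t - σ * (y t - x t)) * δx t + (1 / T * deriv y t - x t * (ρ - z t) + y t) * δy t + (1 / T * deriv z t - x t * y t + β * z t) * δz t)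
      (fun s _ => hΦder s) (Continuous.intervalIntegrable (by fun_prop) 0 1)
  have hzero : (∫ s in (0:ℝ)..1, ((1 / T * deriv (deriv x) s - σ * (deriv y s - deriv x s)) * δx s + (1 / T * deriv x s - σ * (y s - x s)) * deriv δx s) + ((1 / T * deriv (deriv y) s - (deriv x s * (ρ - z s) + x s * (0 - deriv z s)) + deriv y s) * δy s + (1 / T * deriv y s - x s * (ρ - z s) + y s) * deriv δy s) + ((1 / T * deriv (deriv z) s - (deriv x s * y s + x s * deriv y s) + β * deriv z s) * δz s + (1 / T * deriv z s - x s * y s + β * z s) * deriv δz s)) = 0 := by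
    rw [hftc]
    simp only [hbx1, hby1, hbz1, hbx, hby, hbz, hbδx, hbδy, hbδz, sub_self]
  -- derivative of the three component integrals
  have hsum : HasDerivAt (fun ε : ℝ => (1:ℝ)/2 * ((∫ s in (0:ℝ)..1, ((1/(T + ε*δT)) * (deriv x s + ε * deriv δx s) + ((σ * (x s - y s)) + ε * (σ * (δx s - δy s)) + ε^2 * 0))^2) + (∫ s in (0:ℝ)..1, ((1/(T + ε*δT)) * (deriv y s + ε * deriv δy s) + ((y s - x s * (ρ - z s)) + ε * (δy s - δx s * (ρ - z s) + x s * δz s) + ε^2 * (δx s * δz s)))^2) + (∫ s in (0:ℝ)..1, ((1/(T + ε*δT)) * (deriv z s + ε * deriv δz s) + ((β * z s - x s * y s) + ε * (β * δz s - δx s * y s - x s * δy s) + ε^2 * (-(δx s * δy s))))^2)))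
      ((1:ℝ)/2 * ((∫ s in (0:ℝ)..1, 2 * ((1/T) * deriv x s + (σ * (x s - y s))) * ((1/T) * deriv δx s + (σ * (δx s - δy s)) - (δT/T^2) * deriv x s)) + (∫ s in (0:ℝ)..1, 2 * ((1/T) * deriv y s + (y s - x s * (ρ - z s))) * ((1/T) * deriv δy s + (δy s - δx s * (ρ - z s) + x s * δz s) - (δT/T^2) * deriv y s)) + (∫ s in (0:ℝ)..1, 2 * ((1/T) * deriv z s + (β * z s - x s * y s)) * ((1/T) * deriv δz s + (β * δz s - δx s * y s - x s * δy s) - (δT/T^2) * deriv z s)))) 0 := by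
    exact HasDerivAt.const_mul ((1:ℝ)/2)
      (((comp_hasDerivAt T δT hT' (fun s => deriv x s) (fun s => deriv δx s) (fun s => σ * (x s - y s)) (fun s => σ * (δx s - δy s)) (fun _ => (0:ℝ))
          (by fun_prop) (by fun_prop) (by fun_prop) (by fun_prop) (by fun_prop)).add
        (comp_hasDerivAt T δT hT' (fun s => deriv y s) (fun s => deriv δy s) (fun s => y s - x s * (ρ - z s)) (fun s => δy s - δx s * (ρ - z s) + x s * δz s) (fun s => δx s * δz s)
          (by fun_prop) (by fun_prop) (by fun_prop) (by fun_prop) (by fun_prop))).add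
        (comp_hasDerivAt T δT hT' (fun s => deriv z s) (fun s => deriv δz s) (fun s => β * z s - x s * y s) (fun s => β * δz s - δx s * y s - x s * δy s) (fun s => -(δx s * δy s))
          (by fun_prop) (by fun_prop) (by fun_prop) (by fun_prop) (by fun_prop)))
  -- the loop-cost function equals the three-component sum
  have hfe : (fun ε : ℝ =>
        ((1 : ℝ) / 2) * ∫ s in (0 : ℝ)..1,
          (((1 / (T + ε * δT)) * deriv (fun s' => x s' + ε * δx s') s
              - σ * ((y s + ε * δy s) - (x s + ε * δx s))) ^ 2
            + ((1 / (T + ε * δT)) * deriv (fun s' => y s' + ε * δy s') s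
              - (x s + ε * δx s) * (ρ - (z s + ε * δz s)) + (y s + ε * δy s)) ^ 2
            + ((1 / (T + ε * δT)) * deriv (fun s' => z s' + ε * δz s') s
              - (x s + ε * δx s) * (y s + ε * δy s) + β * (z s + ε * δz s)) ^ 2))
      = (fun ε : ℝ => (1:ℝ)/2 * ((∫ s in (0:ℝ)..1, ((1/(T + ε*δT)) * (deriv x s + ε * deriv δx s) + ((σ * (x s - y s)) + ε * (σ * (δx s - δy s)) + ε^2 * 0))^2) + (∫ s in (0:ℝ)..1, ((1/(T + ε*δT)) * (deriv y s + ε * deriv δy s) + ((y s - x s * (ρ - z s)) + ε * (δy s - δx s * (ρ - z s) + x s * δz s) + ε^2 * (δx s * δz s)))^2) + (∫ s in (0:ℝ)..1, ((1/(T + ε*δT)) * (deriv z s + ε * deriv δz s) + ((β * z s - x s * y s) + ε * (β * δz s - δx s * y s - x s * δy s) + ε^2 * (-(δx s * δy s))))^2))) := by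
    funext ε
    have e1 : (∫ s in (0 : ℝ)..1,
          (((1 / (T + ε * δT)) * deriv (fun s' => x s' + ε * δx s') s
              - σ * ((y s + ε * δy s) - (x s + ε * δx s))) ^ 2
            + ((1 / (T + ε * δT)) * deriv (fun s' => y s' + ε * δy s') s
              - (x s + ε * δx s) * (ρ - (z s + ε * δz s)) + (y s + ε * δy s)) ^ 2
            + ((1 / (T + ε * δT)) * deriv (fun s' => z s' + ε * δz s') s
              - (x s + ε * δx s) * (y s + ε * δy s) + β * (z s + ε * δz s)) ^ 2))
        = ∫ s in (0:ℝ)..1, (((1/(T + ε*δT)) * (deriv x s + ε * deriv δx s) + ((σ * (x s - y s)) + ε * (σ * (δx s - δy s)) + ε^2 * 0))^2 + ((1/(T + ε*δT)) * (deriv y s + ε * deriv δy s) + ((y s - x s * (ρ - z s)) + ε * (δy s - δx s * (ρ - z s) + x s * δz s) + ε^2 * (δx s * δz s)))^2 + ((1/(T + ε*δT)) * (deriv z s + ε * deriv δz s) + ((β * z s - x s * y s) + ε * (β * δz s - δx s * y s - x s * δy s) + ε^2 * (-(δx s * δy s))))^2) :=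
      intervalIntegral.integral_congr (fun s _ => by rw [hdx ε s, hdy ε s, hdz ε s]; ring)
    have hadd : (∫ s in (0:ℝ)..1, (((1/(T + ε*δT)) * (deriv x s + ε * deriv δx s) + ((σ * (x s - y s)) + ε * (σ * (δx s - δy s)) + ε^2 * 0))^2 + ((1/(T + ε*δT)) * (deriv y s + ε * deriv δy s) + ((y s - x s * (ρ - z s)) + ε * (δy s - δx s * (ρ - z s) + x s * δz s) + ε^2 * (δx s * δz s)))^2 + ((1/(T + ε*δT)) * (deriv z s + ε * deriv δz s) + ((β * z s - x s * y s) + ε * (β * δz s - δx s * y s - x s * δy s) + ε^2 * (-(δx s * δy s))))^2))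
        = (∫ s in (0:ℝ)..1, ((1/(T + ε*δT)) * (deriv x s + ε * deriv δx s) + ((σ * (x s - y s)) + ε * (σ * (δx s - δy s)) + ε^2 * 0))^2) + (∫ s in (0:ℝ)..1, ((1/(T + ε*δT)) * (deriv y s + ε * deriv δy s) + ((y s - x s * (ρ - z s)) + ε * (δy s - δx s * (ρ - z s) + x s * δz s) + ε^2 * (δx s * δz s)))^2) + (∫ s in (0:ℝ)..1, ((1/(T + ε*δT)) * (deriv z s + ε * deriv δz s) + ((β * z s - x s * y s) + ε * (β * δz s - δx s * y s - x s * δy s) + ε^2 * (-(δx s * δy s))))^2) :=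
      integral_add3 (by fun_prop) (by fun_prop) (by fun_prop)
    rw [e1, hadd]
  -- identify the stated adjoint value with the computed derivative
  have h1' : (∫ s in (0 : ℝ)..1,
        ((-(1 / T) * deriv rx s + σ * rx s - (ρ - z s) * ry s - y s * rz s) * δx s
          + (-(1 / T) * deriv ry s - σ * rx s + ry s - x s * rz s) * δy s
          + (-(1 / T) * deriv rz s + x s * ry s + β * rz s) * δz s))
      = ∫ s in (0:ℝ)..1, ((1:ℝ)/2 * (2 * ((1/T) * deriv x s + (σ * (x s - y s))) * ((1/T) * deriv δx s + (σ * (δx s - δy s)) - (δT/T^2) * deriv x s)) + (1:ℝ)/2 * (2 * ((1/T) * deriv y s + (y s - x s * (ρ - z s))) * ((1/T) * deriv δy s + (δy s - δx s * (ρ - z s) + x s * δz s) - (δT/T^2) * deriv y s)) + (1:ℝ)/2 * (2 * ((1/T) * deriv z s + (β * z s - x s * y s)) * ((1/T) * deriv δz s + (β * δz s - δx s * y s - x s * δy s) - (δT/T^2) * deriv z s)) + (-(1/T)) * (((1 / T * deriv (deriv x) s - σ * (deriv y s - deriv x s)) * δx s + (1 / T * deriv x s - σ * (y s - x s)) * deriv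 δx s) + ((1 / T * deriv (deriv y) s - (deriv x s * (ρ - z s) + x s * (0 - deriv z s)) + deriv y s) * δy s + (1 / T * deriv y s - x s * (ρ - z s) + y s) * deriv δy s) + ((1 / T * deriv (deriv z) s - (deriv x s * y s + x s * deriv y s) + β * deriv z s) * δz s + (1 / T * deriv z s - x s * y s + β * z s) * deriv δz s)) + (δT/T^2) * ((1 / T * deriv x s - σ * (y s - x s)) * deriv x s + (1 / T * deriv y s - x s * (ρ - z s) + y s) * deriv y s + (1 / T * deriv z s - x s * y s + β * z s) * deriv z s)) :=
    intervalIntegral.integral_congr (fun s _ => by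
      simp only [hdrx, hdry, hdrz, hrx, hry, hrz]; ring)
  have h2 : (∫ s in (0 : ℝ)..1, (deriv x s * rx s + deriv y s * ry s + deriv z s * rz s))
      = ∫ s in (0:ℝ)..1, ((1 / T * deriv x s - σ * (y s - x s)) * deriv x s + (1 / T * deriv y s - x s * (ρ - z s) + y s) * deriv y s + (1 / T * deriv z s - x s * y s + β * z s) * deriv z s) := by
    refine intervalIntegral.integral_congr (fun s _ => ?_)
    rw [hrx s, hry s, hrz s]
    ring
  have hsplit : (∫ s in (0:ℝ)..1, ((1:ℝ)/2 * (2 * ((1/T) * deriv x s + (σ * (x s - y s))) * ((1/T) * deriv δx s + (σ * (δx s - δy s)) - (δT/T^2) * deriv x s)) + (1:ℝ)/2 * (2 * ((1/T) * deriv y s + (y s - x s * (ρ - z s))) * ((1/T) * deriv δy s + (δy s - δx s * (ρ - z s) + x s * δz s) - (δT/T^2) * deriv y s)) + (1:ℝ)/2 * (2 * ((1/T) * deriv z s + (β * z s - x s * y s)) * ((1/T) * deriv δz s + (β * δz s - δx s * y s - x s * δy s) - (δT/T^2) * deriv z s)) + (-(1/T)) * (((1 / T * deriv (deriv x) s - σ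 * (deriv y s - deriv x s)) * δx s + (1 / T * deriv x s - σ * (y s - x s)) * deriv δx s) + ((1 / T * deriv (deriv y) s - (deriv x s * (ρ - z s) + x s * (0 - deriv z s)) + deriv y s) * δy s + (1 / T * deriv y s - x s * (ρ - z s) + y s) * deriv δy s) + ((1 / T * deriv (deriv z) s - (deriv x s * y s + x s * deriv y s) + β * deriv z s) * δz s + (1 / T * deriv z s - x s * y s + β * z s) * deriv δz s)) + (δT/T^2) * ((1 / T * deriv x s - σ * (y s - x s)) * deriv x s + (1 / T * deriv y s - x s * (ρ - z s) + y s) * deriv y s + (1 / T * deriv z s - x s * y s + β * z s) * deriv z s)))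
      = (1:ℝ)/2 * (∫ s in (0:ℝ)..1, 2 * ((1/T) * deriv x s + (σ * (x s - y s))) * ((1/T) * deriv δx s + (σ * (δx s - δy s)) - (δT/T^2) * deriv x s)) + (1:ℝ)/2 * (∫ s in (0:ℝ)..1, 2 * ((1/T) * deriv y s + (y s - x s * (ρ - z s))) * ((1/T) * deriv δy s + (δy s - δx s * (ρ - z s) + x s * δz s) - (δT/T^2) * deriv y s)) + (1:ℝ)/2 * (∫ s in (0:ℝ)..1, 2 * ((1/T) * deriv z s + (β * z s - x s * y s)) * ((1/T) * deriv δz s + (β * δz s - δx s * y s - x s * δy s) - (δT/T^2) * deriv z s))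
        + (-(1/T)) * (∫ s in (0:ℝ)..1, ((1 / T * deriv (deriv x) s - σ * (deriv y s - deriv x s)) * δx s + (1 / T * deriv x s - σ * (y s - x s)) * deriv δx s) + ((1 / T * deriv (deriv y) s - (deriv x s * (ρ - z s) + x s * (0 - deriv z s)) + deriv y s) * δy s + (1 / T * deriv y s - x s * (ρ - z s) + y s) * deriv δy s) + ((1 / T * deriv (deriv z) s - (deriv x s * y s + x s * deriv y s) + β * deriv z s) * δz s + (1 / T * deriv z s - x s * y s + β * z s) * deriv δz s)) + (δT/T^2) * (∫ s in (0:ℝ)..1, ((1 / T * deriv x s - σ * (y s - x s)) * deriv x s + (1 / T * deriv y s - x s * (ρ - z s) + y s) * deriv y s + (1 / T * deriv z s - x s * y s + β * z s) * deriv z s)) :=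
    integral_comb5 _ _ _ _ _ (by fun_prop) (by fun_prop) (by fun_prop) (by fun_prop) (by fun_prop)
  have hval : ((∫ s in (0 : ℝ)..1,
          ((-(1 / T) * deriv rx s + σ * rx s - (ρ - z s) * ry s - y s * rz s) * δx s
            + (-(1 / T) * deriv ry s - σ * rx s + ry s - x s * rz s) * δy s
            + (-(1 / T) * deriv rz s + x s * ry s + β * rz s) * δz s))
        - (δT / T ^ 2) *
          ∫ s in (0 : ℝ)..1, (deriv x s * rx s + deriv y s * ry s + deriv z s * rz s))
      = ((1:ℝ)/2 * ((∫ s in (0:ℝ)..1, 2 * ((1/T) * deriv x s + (σ * (x s - y s))) * ((1/T) * deriv δx s + (σ * (δx s - δy s)) - (δT/T^2) * deriv x s)) + (∫ s in (0:ℝ)..1, 2 * ((1/T) * deriv y s + (y s - x s * (ρ - z s))) * ((1/T) * deriv δy s + (δy s - δx s * (ρ - z s) + x s * δz s) - (δT/T^2) * deriv y s)) + (∫ s in (0:ℝ)..1, 2 * ((1/T) * deriv z s + (β * z s - x s * y s)) * ((1/T) * deriv δz s + (β * δz s - δx s * y s - x s * δy s) - (δT/T^2) * deriv z s)))) := by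
    rw [h1', h2, hsplit, hzero]
    ring
  rw [hfe, hval]
  exact hsum
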